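/- Suppose (μ_n, u_n) → (μ, u) in TL² and v: D → ℝ is bounded and Lipschitz on a bounded domain D. If T_n are transportation maps with (T_n)_♯ μ = μ_n and ‖Id − T_n‖_∞ → 0, then u_n ∘ T_n → u in L²(μ). Conversely, if μ_n ⇀ μ weakly and there exist transportation maps T_n with (T_n)_♯ μ = μ_n, ‖Id − T_n‖_∞ → 0, and ∫_D |u(x) − u_n(T_n(x))|² dμ(x) → 0, then (μ_n, u_n) → (μ, u) in TL². -/

import Mathlib

open MeasureTheory Filter ProbabilityTheory
open scoped ENNReal

lemma aux_sq2 {x y z : ℝ≥0∞} (h : x ≤ y + z) : x ^ 2 ≤ 4 * y ^ 2 + 4 * z ^ 2 := by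
  have hm : y * z ≤ y ^ 2 + z ^ 2 := by
    rcases le_total y z with h' | h'
    · calc y * z ≤ z * z := by gcongr
        _ = z ^ 2 := (sq z).symm
        _ ≤ _ := le_add_self
    · calc y * z ≤ y * y := by gcongr
        _ = y ^ 2 := (sq y).symm
        _ ≤ _ := le_self_add
  calc x ^ 2 ≤ (y + z) ^ 2 := by gcongr
    _ = y ^ 2 + z ^ 2 + 2 * (y * z) := by ring
    _ ≤ y ^ 2 + z ^ 2 + 2 * (y ^ 2 + z ^ 2) := by gcongr
    _ = 3 * y ^ 2 + 3 * z ^ 2 := by ring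
    _ ≤ 4 * y ^ 2 + 4 * z ^ 2 := by gcongr <;> norm_num

lemma aux_sq3 {x a b c : ℝ≥0∞} (h : x ≤ a + b + c) :
    x ^ 2 ≤ 16 * a ^ 2 + 16 * b ^ 2 + 16 * c ^ 2 := by
  have h1 := aux_sq2 (x := x) (y := a) (z := b + c) (by rw [← add_assoc]; exact h)
  have h2 := aux_sq2 (x := b + c) (y := b) (z := c) le_rfl
  calc x ^ 2 ≤ 4 * a ^ 2 + 4 * (b + c) ^ 2 := h1
    _ ≤ 4 * a ^ 2 + 4 * (4 * b ^ 2 + 4 * c ^ 2) := by gcongr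
    _ = 4 * a ^ 2 + 16 * b ^ 2 + 16 * c ^ 2 := by ring
    _ ≤ _ := by gcongr <;> norm_num

lemma aux_lintegral_sq {α : Type*} [MeasurableSpace α] (μ : Measure α) (f : α → ℝ) :
    ∫⁻ x, (‖f x‖₊ : ℝ≥0∞) ^ 2 ∂μ = eLpNorm f 2 μ ^ 2 := by
  have h2 : ((2 : ℝ≥0∞)).toReal = (2 : ℝ) := by simp
  rw [eLpNorm_eq_lintegral_rpow_enorm_toReal two_ne_zero ENNReal.ofNat_ne_top]
  simp only [enorm_eq_nnnorm]
  rw [h2,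
    ← ENNReal.rpow_natCast ((∫⁻ x, (‖f x‖₊ : ℝ≥0∞) ^ (2:ℝ) ∂μ) ^ (1/(2:ℝ))) 2,
    ← ENNReal.rpow_mul]
  norm_num

lemma aux_int_sq {α : Type*} [MeasurableSpace α] {μ : Measure α} {f : α → ℝ}
    (hf : MemLp f 2 μ) : Integrable (fun x => ‖f x‖ ^ 2) μ := by
  have h := hf.integrable_norm_rpow two_ne_zero ENNReal.ofNat_ne_top
  refine h.congr (Filter.Eventually.of_forall fun x => ?_)
  have h2 : ((2 : ℝ≥0∞)).toReal = ((2 : ℕ) : ℝ) := by norm_num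
  show ‖f x‖ ^ ((2 : ℝ≥0∞)).toReal = ‖f x‖ ^ (2 : ℕ)
  rw [h2, Real.rpow_natCast]

lemma ofReal_norm_eq_coe_nnnorm {E : Type*} [SeminormedAddCommGroup E] (a : E) :
    ENNReal.ofReal ‖a‖ = (‖a‖₊ : ℝ≥0∞) := ofReal_norm a

lemma Measurable.ennnorm {β E : Type*} [MeasurableSpace β] [NormedAddCommGroup E]
    [MeasurableSpace E] [OpensMeasurableSpace E] {f : β → E} (hf : Measurable f) :
    Measurable (fun x => (‖f x‖₊ : ℝ≥0∞)) := hf.enorm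

/-- The `TL²` distance between `(μ, f)` and `(θ, g)`. -/
noncomputable def dTL2 {d : ℕ} (μ θ : Measure (EuclideanSpace ℝ (Fin d)))
    (f g : EuclideanSpace ℝ (Fin d) → ℝ) : ℝ :=
  sInf { r : ℝ | ∃ π : Measure (EuclideanSpace ℝ (Fin d) × EuclideanSpace ℝ (Fin d)),
      π.fst = μ ∧ π.snd = θ ∧
      r = Real.sqrt (∫ p, dist p.1 p.2 ^ 2 + dist (f p.1) (g p.2) ^ 2 ∂π) }

set_option maxHeartbeats 2000000 in
/-- On a bounded domain `D`, with `μ` absolutely continuous, `(T_n)_♯ μ = μ_n` transportation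
maps with `‖Id − T_n‖_∞ → 0`: if `(μ_n, u_n) → (μ, u)` in `TL²` then `u_n ∘ T_n → u` in
`L²(μ)`; conversely if `μ_n ⇀ μ` weakly and `u_n ∘ T_n → u` in `L²(μ)`, then
`(μ_n, u_n) → (μ, u)` in `TL²`. -/
theorem TL2_conv_iff_via_transport_maps (d : ℕ) (D : Set (EuclideanSpace ℝ (Fin d)))
    (hDo : IsOpen D) (hDb : Bornology.IsBounded D)
    (μ : Measure (EuclideanSpace ℝ (Fin d))) [IsProbabilityMeasure μ]
    (hac : μ ≪ volume) (hμD : μ Dᶜ = 0)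
    (μs : ℕ → Measure (EuclideanSpace ℝ (Fin d)))
    (hprob : ∀ n, IsProbabilityMeasure (μs n)) (hμsD : ∀ n, μs n Dᶜ = 0)
    (u : EuclideanSpace ℝ (Fin d) → ℝ) (us : ℕ → EuclideanSpace ℝ (Fin d) → ℝ)
    (hu : MemLp u 2 μ) (hus : ∀ n, MemLp (us n) 2 (μs n))
    (v : EuclideanSpace ℝ (Fin d) → ℝ) (hvb : ∃ Cv, ∀ x, |v x| ≤ Cv)
    (hvl : ∃ Kv : NNReal, LipschitzWith Kv v)
    (T : ℕ → EuclideanSpace ℝ (Fin d) → EuclideanSpace ℝ (Fin d))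
    (hTm : ∀ n, Measurable (T n)) (hTpush : ∀ n, Measure.map (T n) μ = μs n)
    (δ : ℕ → ℝ) (hδ : Tendsto δ atTop (nhds 0))
    (hT : ∀ n, ∀ x ∈ D, dist x (T n x) ≤ δ n) :
    (Tendsto (fun n => dTL2 μ (μs n) u (us n)) atTop (nhds 0) →
        Tendsto (fun n => ∫ x, |u x - us n (T n x)| ^ 2 ∂μ) atTop (nhds 0))
    ∧ ((∀ f : BoundedContinuousFunction (EuclideanSpace ℝ (Fin d)) ℝ,
          Tendsto (fun n => ∫ x, f x ∂(μs n)) atTop (nhds (∫ x, f x ∂μ))) →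
        Tendsto (fun n => ∫ x, |u x - us n (T n x)| ^ 2 ∂μ) atTop (nhds 0) →
        Tendsto (fun n => dTL2 μ (μs n) u (us n)) atTop (nhds 0)) := by
  classical
  haveI := hprob
  -- basic facts about `D`, `δ`
  have hDne : D.Nonempty := by
    rcases Set.eq_empty_or_nonempty D with h | h
    · exfalso
      rw [h, Set.compl_empty] at hμD
      simp [measure_univ] at hμD
    · exact h
  obtain ⟨x₀, hx₀⟩ := hDne
  have hδ0 : ∀ n, 0 ≤ δ n := fun n => le_trans dist_nonneg (hT n x₀ hx₀)
  have hDaem : ∀ᵐ x ∂μ, x ∈ D := by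
    rw [ae_iff]
    exact hμD
  -- the transport-map coupling
  have hmapc : ∀ n, (μ.map (fun x => (x, T n x))).fst = μ ∧
      (μ.map (fun x => (x, T n x))).snd = μs n := by
    intro n
    have hpm : Measurable fun x => (x, T n x) := measurable_id.prodMk (hTm n)
    constructor
    · rw [Measure.fst, Measure.map_map measurable_fst hpm]
      have : (Prod.fst ∘ fun x => (x, T n x)) = id := rfl
      rw [this, Measure.map_id]
    · rw [Measure.snd, Measure.map_map measurable_snd hpm]
      have : (Prod.snd ∘ fun x => (x, T n x)) = T n := rfl
      rw [this]
      exact hTpush n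
  have hd0 : ∀ n, 0 ≤ dTL2 μ (μs n) u (us n) := by
    intro n
    apply Real.sInf_nonneg
    rintro r ⟨π, -, -, rfl⟩
    exact Real.sqrt_nonneg _
  have hbddS : ∀ n, BddBelow { r : ℝ | ∃ π : Measure (EuclideanSpace ℝ (Fin d) ×
      EuclideanSpace ℝ (Fin d)), π.fst = μ ∧ π.snd = μs n ∧
      r = Real.sqrt (∫ p, dist p.1 p.2 ^ 2 + dist (u p.1) (us n p.2) ^ 2 ∂π) } := by
    intro n
    refine ⟨0, ?_⟩
    rintro r ⟨π, -, -, rfl⟩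
    exact Real.sqrt_nonneg _
  -- key integrability and computation for the transport-map coupling
  have hkey : ∀ n, dTL2 μ (μs n) u (us n) ≤
      Real.sqrt (δ n ^ 2 + ∫ x, |u x - us n (T n x)| ^ 2 ∂μ) := by
    intro n
    set πn := μ.map (fun x => (x, T n x)) with hπdef
    have hpm : Measurable fun x => (x, T n x) := measurable_id.prodMk (hTm n)
    -- membership
    have hmem : Real.sqrt (∫ p, dist p.1 p.2 ^ 2 + dist (u p.1) (us n p.2) ^ 2 ∂πn) ∈
        { r : ℝ | ∃ π : Measure (EuclideanSpace ℝ (Fin d) × EuclideanSpace ℝ (Fin d)),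
          π.fst = μ ∧ π.snd = μs n ∧
          r = Real.sqrt (∫ p, dist p.1 p.2 ^ 2 + dist (u p.1) (us n p.2) ^ 2 ∂π) } :=
      ⟨πn, (hmapc n).1, (hmapc n).2, rfl⟩
    have hle : dTL2 μ (μs n) u (us n) ≤
        Real.sqrt (∫ p, dist p.1 p.2 ^ 2 + dist (u p.1) (us n p.2) ^ 2 ∂πn) :=
      csInf_le (hbddS n) hmem
    -- compute the integral
    have hau : AEStronglyMeasurable (fun p : EuclideanSpace ℝ (Fin d) ×
        EuclideanSpace ℝ (Fin d) => u p.1) πn := by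
      have h1 : AEStronglyMeasurable u (πn.map Prod.fst) := by
        rw [show πn.map Prod.fst = πn.fst from rfl, (hmapc n).1]
        exact hu.1
      exact h1.comp_measurable measurable_fst
    have haus : AEStronglyMeasurable (fun p : EuclideanSpace ℝ (Fin d) ×
        EuclideanSpace ℝ (Fin d) => us n p.2) πn := by
      have h1 : AEStronglyMeasurable (us n) (πn.map Prod.snd) := by
        rw [show πn.map Prod.snd = πn.snd from rfl, (hmapc n).2]
        exact (hus n).1
      exact h1.comp_measurable measurable_snd
    have hFm : AEStronglyMeasurable
        (fun p : EuclideanSpace ℝ (Fin d) × EuclideanSpace ℝ (Fin d) =>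
          dist p.1 p.2 ^ 2 + dist (u p.1) (us n p.2) ^ 2) πn := by
      refine AEStronglyMeasurable.add ?_ ?_
      · exact ((measurable_fst.dist measurable_snd).pow_const 2).aestronglyMeasurable
      · exact ((hau.dist haus).mul (hau.dist haus)).congr
          (Filter.Eventually.of_forall fun p => (sq _).symm)
    have hint : ∫ p, dist p.1 p.2 ^ 2 + dist (u p.1) (us n p.2) ^ 2 ∂πn
        = ∫ x, (dist x (T n x) ^ 2 + dist (u x) (us n (T n x)) ^ 2) ∂μ := by
      rw [hπdef]
      exact integral_map hpm.aemeasurable (by rw [← hπdef]; exact hFm)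
    -- integrability over μ
    have h1int : Integrable (fun x => dist x (T n x) ^ 2) μ := by
      refine Integrable.mono' (integrable_const (δ n ^ 2))
        (((measurable_id.dist (hTm n)).pow_const 2).aestronglyMeasurable) ?_
      refine hDaem.mono fun x hx => ?_
      rw [Real.norm_eq_abs, abs_of_nonneg (by positivity)]
      exact pow_le_pow_left₀ dist_nonneg (hT n x hx) 2
    have hcompL2 : MemLp (fun x => us n (T n x)) 2 μ := by
      have : MemLp (us n) 2 (μ.map (T n)) := by rw [hTpush n]; exact hus n
      exact (memLp_map_measure_iff (by rw [hTpush n]; exact (hus n).1)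
        (hTm n).aemeasurable).mp this
    have h2int : Integrable (fun x => dist (u x) (us n (T n x)) ^ 2) μ := by
      have := aux_int_sq (hu.sub hcompL2)
      refine this.congr (Filter.Eventually.of_forall fun x => ?_)
      simp [Real.dist_eq, Real.norm_eq_abs]
    have hJ : ∫ x, dist x (T n x) ^ 2 ∂μ ≤ δ n ^ 2 := by
      have := integral_mono_ae h1int (integrable_const (δ n ^ 2))
        (hDaem.mono fun x hx => pow_le_pow_left₀ dist_nonneg (hT n x hx) 2)
      simpa using this
    have habs : (fun x => dist (u x) (us n (T n x)) ^ 2)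
        = fun x => |u x - us n (T n x)| ^ 2 := by
      funext x; rw [Real.dist_eq]
    calc dTL2 μ (μs n) u (us n)
        ≤ Real.sqrt (∫ p, dist p.1 p.2 ^ 2 + dist (u p.1) (us n p.2) ^ 2 ∂πn) := hle
      _ = Real.sqrt (∫ x, dist x (T n x) ^ 2 ∂μ + ∫ x, dist (u x) (us n (T n x)) ^ 2 ∂μ) := by
          rw [hint, integral_add h1int h2int]
      _ ≤ Real.sqrt (δ n ^ 2 + ∫ x, |u x - us n (T n x)| ^ 2 ∂μ) := by
          rw [habs]
          exact Real.sqrt_le_sqrt (by gcongr)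
  constructor
  · -- forward direction
    intro hTL
    -- measurable representatives
    obtain ⟨u', hu'm, hu'e⟩ : ∃ u', StronglyMeasurable u' ∧ u =ᵐ[μ] u' :=
      ⟨hu.1.mk u, hu.1.stronglyMeasurable_mk, hu.1.ae_eq_mk⟩
    set us' : ℕ → EuclideanSpace ℝ (Fin d) → ℝ := fun n => (hus n).1.mk (us n) with hus'def
    have hus'm : ∀ n, StronglyMeasurable (us' n) := fun n => (hus n).1.stronglyMeasurable_mk
    have hus'e : ∀ n, us n =ᵐ[μs n] us' n := fun n => (hus n).1.ae_eq_mk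
    have hu' : MemLp u' 2 μ := hu.ae_eq hu'e
    have hu'meas : Measurable u' := hu'm.measurable
    have hus'meas : ∀ n, Measurable (us' n) := fun n => (hus'm n).measurable
    have hus'L2 : ∀ n, MemLp (us' n) 2 (μs n) := fun n => (hus n).ae_eq (hus'e n)
    set G : ℕ → ℝ≥0∞ := fun n => ∫⁻ x, (‖u' x - us' n (T n x)‖₊ : ℝ≥0∞) ^ 2 ∂μ with hGdef
    have hGoal : ∀ n, ∫ x, |u x - us n (T n x)| ^ 2 ∂μ = (G n).toReal := by
      intro n
      have hae : ∀ᵐ x ∂μ, us n (T n x) = us' n (T n x) := by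
        refine ae_of_ae_map (p := fun y => us n y = us' n y) (hTm n).aemeasurable ?_
        rw [hTpush n]; exact hus'e n
      have h1 : ∫ x, |u x - us n (T n x)| ^ 2 ∂μ = ∫ x, |u' x - us' n (T n x)| ^ 2 ∂μ := by
        refine integral_congr_ae ?_
        filter_upwards [hu'e, hae] with x h1 h2
        rw [h1, h2]
      have hm : AEStronglyMeasurable (fun x => |u' x - us' n (T n x)| ^ 2) μ :=
        (((hu'meas.sub ((hus'meas n).comp (hTm n))).abs).pow_const 2).aestronglyMeasurable
      rw [h1, integral_eq_lintegral_of_nonneg_ae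
        (Filter.Eventually.of_forall fun x => by positivity) hm]
      congr 1
      refine lintegral_congr fun x => ?_
      rw [← Real.norm_eq_abs, ENNReal.ofReal_pow (norm_nonneg _), ofReal_norm_eq_coe_nnnorm]
    suffices hG : Tendsto G atTop (nhds 0) by
      have h2 := (ENNReal.tendsto_toReal (by simp : (0:ℝ≥0∞) ≠ ⊤)).comp hG
      rw [show (fun n => ∫ x, |u x - us n (T n x)| ^ 2 ∂μ) = fun n => (G n).toReal
        from funext hGoal]
      simpa [Function.comp_def] using h2
    -- choose near-optimal couplings
    have hchoice : ∀ n, ∃ π : Measure (EuclideanSpace ℝ (Fin d) × EuclideanSpace ℝ (Fin d)),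
        π.fst = μ ∧ π.snd = μs n ∧
        Real.sqrt (∫ p, dist p.1 p.2 ^ 2 + dist (u p.1) (us n p.2) ^ 2 ∂π)
          < dTL2 μ (μs n) u (us n) + 1 / (n + 1) := by
      intro n
      have hne : Set.Nonempty { r : ℝ | ∃ π : Measure (EuclideanSpace ℝ (Fin d) ×
          EuclideanSpace ℝ (Fin d)), π.fst = μ ∧ π.snd = μs n ∧
          r = Real.sqrt (∫ p, dist p.1 p.2 ^ 2 + dist (u p.1) (us n p.2) ^ 2 ∂π) } :=
        ⟨_, ⟨μ.map (fun x => (x, T n x)), (hmapc n).1, (hmapc n).2, rfl⟩⟩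
      have hlt : dTL2 μ (μs n) u (us n) < dTL2 μ (μs n) u (us n) + 1 / (n + 1) :=
        lt_add_of_pos_right _ (by positivity)
      obtain ⟨r, ⟨πr, h1, h2, rfl⟩, hrlt⟩ := exists_lt_of_csInf_lt hne hlt
      exact ⟨πr, h1, h2, hrlt⟩
    choose π hπf hπs hπlt using hchoice
    haveI hπprob : ∀ n, IsProbabilityMeasure (π n) := fun n =>
      ⟨by rw [← Measure.fst_univ, hπf n]; exact measure_univ⟩
    -- a.e. transfer
    have haeu : ∀ n, ∀ᵐ p : EuclideanSpace ℝ (Fin d) × EuclideanSpace ℝ (Fin d) ∂(π n),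
        u p.1 = u' p.1 := fun n => by
      refine ae_of_ae_map (p := fun y => u y = u' y) measurable_fst.aemeasurable ?_
      rw [show (π n).map Prod.fst = (π n).fst from rfl, hπf n]
      exact hu'e
    have haeus : ∀ n, ∀ᵐ p : EuclideanSpace ℝ (Fin d) × EuclideanSpace ℝ (Fin d) ∂(π n),
        us n p.2 = us' n p.2 := fun n => by
      refine ae_of_ae_map (p := fun y => us n y = us' n y) measurable_snd.aemeasurable ?_
      rw [show (π n).map Prod.snd = (π n).snd from rfl, hπs n]
      exact hus'e n
    have hDaems : ∀ n, ∀ᵐ y ∂(μs n), y ∈ D := fun n => by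
      rw [ae_iff]; exact hμsD n
    have haeD : ∀ n, ∀ᵐ p : EuclideanSpace ℝ (Fin d) × EuclideanSpace ℝ (Fin d) ∂(π n),
        p.1 ∈ D ∧ p.2 ∈ D := by
      intro n
      have h1 : ∀ᵐ p : EuclideanSpace ℝ (Fin d) × EuclideanSpace ℝ (Fin d) ∂(π n),
          p.1 ∈ D := by
        refine ae_of_ae_map (p := fun y => y ∈ D) measurable_fst.aemeasurable ?_
        rw [show (π n).map Prod.fst = (π n).fst from rfl, hπf n]
        exact hDaem
      have h2 : ∀ᵐ p : EuclideanSpace ℝ (Fin d) × EuclideanSpace ℝ (Fin d) ∂(π n),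
          p.2 ∈ D := by
        refine ae_of_ae_map (p := fun y => y ∈ D) measurable_snd.aemeasurable ?_
        rw [show (π n).map Prod.snd = (π n).snd from rfl, hπs n]
        exact hDaems n
      exact h1.and h2
    obtain ⟨R, hRD⟩ := hDb.subset_closedBall 0
    -- the coupling cost tends to zero
    set E : ℕ → ℝ≥0∞ := fun n => ∫⁻ p, ((‖p.1 - p.2‖₊ : ℝ≥0∞) ^ 2
      + (‖u' p.1 - us' n p.2‖₊ : ℝ≥0∞) ^ 2) ∂(π n) with hEdef
    have hE0 : Tendsto E atTop (nhds 0) := by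
      have hEb : ∀ n, E n ≤ ENNReal.ofReal ((dTL2 μ (μs n) u (us n) + 1 / (n + 1)) ^ 2) := by
        intro n
        have hc1 : Integrable (fun p : EuclideanSpace ℝ (Fin d) × EuclideanSpace ℝ (Fin d) =>
            dist p.1 p.2 ^ 2) (π n) := by
          refine Integrable.mono' (integrable_const ((2 * R) ^ 2))
            (((measurable_fst.dist measurable_snd).pow_const 2).aestronglyMeasurable) ?_
          filter_upwards [haeD n] with p hp
          rw [Real.norm_eq_abs, abs_of_nonneg (by positivity)]
          have hb1 : dist p.1 (0 : EuclideanSpace ℝ (Fin d)) ≤ R :=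
            Metric.mem_closedBall.mp (hRD hp.1)
          have hb2 : dist (0 : EuclideanSpace ℝ (Fin d)) p.2 ≤ R := by
            rw [dist_comm]; exact Metric.mem_closedBall.mp (hRD hp.2)
          have h3 := dist_triangle p.1 (0 : EuclideanSpace ℝ (Fin d)) p.2
          nlinarith [dist_nonneg (x := p.1) (y := p.2)]
        have hmapf : (π n).map Prod.fst = μ := by
          rw [show (π n).map Prod.fst = (π n).fst from rfl, hπf n]
        have hmaps : (π n).map Prod.snd = μs n := by
          rw [show (π n).map Prod.snd = (π n).snd from rfl, hπs n]
        have hq1 : Integrable (fun p : EuclideanSpace ℝ (Fin d) × EuclideanSpace ℝ (Fin d) =>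
            ‖u' p.1‖ ^ 2) (π n) := by
          have h0 : Integrable (fun x => ‖u' x‖ ^ 2) μ := aux_int_sq hu'
          exact (integrable_map_measure (by rw [hmapf]; exact h0.1)
            measurable_fst.aemeasurable).mp (by rw [hmapf]; exact h0)
        have hq2 : Integrable (fun p : EuclideanSpace ℝ (Fin d) × EuclideanSpace ℝ (Fin d) =>
            ‖us' n p.2‖ ^ 2) (π n) := by
          have h0 : Integrable (fun x => ‖us' n x‖ ^ 2) (μs n) := aux_int_sq (hus'L2 n)
          exact (integrable_map_measure (by rw [hmaps]; exact h0.1)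
            measurable_snd.aemeasurable).mp (by rw [hmaps]; exact h0)
        have hc2 : Integrable (fun p : EuclideanSpace ℝ (Fin d) × EuclideanSpace ℝ (Fin d) =>
            dist (u' p.1) (us' n p.2) ^ 2) (π n) := by
          refine Integrable.mono' ((hq1.const_mul 2).add (hq2.const_mul 2))
            ((((hu'meas.comp measurable_fst).dist
              ((hus'meas n).comp measurable_snd)).pow_const 2).aestronglyMeasurable) ?_
          refine Filter.Eventually.of_forall fun p => ?_
          simp only [Pi.add_apply]
          rw [Real.norm_eq_abs, abs_of_nonneg (by positivity)]
          have h1 := dist_le_norm_add_norm (u' p.1) (us' n p.2)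
          nlinarith [dist_nonneg (x := u' p.1) (y := us' n p.2),
            norm_nonneg (u' p.1), norm_nonneg (us' n p.2),
            sq_nonneg (‖u' p.1‖ - ‖us' n p.2‖), sq_nonneg (‖u' p.1‖ + ‖us' n p.2‖)]
        have hFF : ∫ p, dist p.1 p.2 ^ 2 + dist (u p.1) (us n p.2) ^ 2 ∂(π n)
            = ∫ p, dist p.1 p.2 ^ 2 + dist (u' p.1) (us' n p.2) ^ 2 ∂(π n) := by
          refine integral_congr_ae ?_
          filter_upwards [haeu n, haeus n] with p h1 h2
          rw [h1, h2]
        have hlt2 : ∫ p, dist p.1 p.2 ^ 2 + dist (u' p.1) (us' n p.2) ^ 2 ∂(π n)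
            < (dTL2 μ (μs n) u (us n) + 1 / (n + 1)) ^ 2 := by
          refine Real.lt_sq_of_sqrt_lt ?_
          have h1 := hπlt n
          rw [hFF] at h1
          exact h1
        have hEeq : E n = ENNReal.ofReal
            (∫ p, dist p.1 p.2 ^ 2 + dist (u' p.1) (us' n p.2) ^ 2 ∂(π n)) := by
          have hi : Integrable (fun p : EuclideanSpace ℝ (Fin d) × EuclideanSpace ℝ (Fin d) =>
              dist p.1 p.2 ^ 2 + dist (u' p.1) (us' n p.2) ^ 2) (π n) := hc1.add hc2
          rw [ofReal_integral_eq_lintegral_ofReal hi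
            (Filter.Eventually.of_forall fun p => by positivity)]
          refine lintegral_congr fun p => ?_
          rw [ENNReal.ofReal_add (by positivity) (by positivity), dist_eq_norm p.1 p.2,
            Real.dist_eq, ← Real.norm_eq_abs, ENNReal.ofReal_pow (norm_nonneg _),
            ENNReal.ofReal_pow (norm_nonneg _), ofReal_norm_eq_coe_nnnorm,
            ofReal_norm_eq_coe_nnnorm]
        rw [hEeq]
        exact ENNReal.ofReal_le_ofReal hlt2.le
      have hbnd : Tendsto (fun n => ENNReal.ofReal
          ((dTL2 μ (μs n) u (us n) + 1 / (n + 1 : ℝ)) ^ 2)) atTop (nhds 0) := by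
        have h1 : Tendsto (fun n : ℕ => (dTL2 μ (μs n) u (us n) + 1 / (n + 1 : ℝ)) ^ 2)
            atTop (nhds 0) := by
          have := (hTL.add tendsto_one_div_add_atTop_nhds_zero_nat).pow 2
          simpa using this
        have := ENNReal.tendsto_ofReal h1
        simpa using this
      exact tendsto_of_tendsto_of_tendsto_of_le_of_le tendsto_const_nhds hbnd
        (fun n => zero_le) hEb
    -- disintegration setup
    set ρ : ℕ → Measure (EuclideanSpace ℝ (Fin d) × EuclideanSpace ℝ (Fin d)) :=
      fun n => (π n).map Prod.swap with hρdef
    haveI hρprob : ∀ n, IsProbabilityMeasure (ρ n) :=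
      fun n => Measure.isProbabilityMeasure_map measurable_swap.aemeasurable
    have hρfst : ∀ n, (ρ n).fst = μs n := by
      intro n
      show ((π n).map Prod.swap).map Prod.fst = μs n
      rw [Measure.map_map measurable_fst measurable_swap]
      have he : (Prod.fst ∘ Prod.swap : EuclideanSpace ℝ (Fin d) × EuclideanSpace ℝ (Fin d)
        → EuclideanSpace ℝ (Fin d)) = Prod.snd := rfl
      rw [he]
      exact hπs n
    set κ : ℕ → Kernel (EuclideanSpace ℝ (Fin d)) (EuclideanSpace ℝ (Fin d)) :=
      fun n => (ρ n).condKernel with hκdef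
    set L : ℕ → Kernel (EuclideanSpace ℝ (Fin d)) (EuclideanSpace ℝ (Fin d)) :=
      fun n => (κ n).comap (T n) (hTm n) with hLdef
    haveI hLmk : ∀ n, IsMarkovKernel (L n) := fun n => Kernel.IsMarkovKernel.comap _ (hTm n)
    set θ : ℕ → Measure (EuclideanSpace ℝ (Fin d) × EuclideanSpace ℝ (Fin d)) :=
      fun n => μ ⊗ₘ L n with hθdef
    haveI hθprob : ∀ n, IsProbabilityMeasure (θ n) := fun n => inferInstance
    have hdis : ∀ n, (ρ n).fst ⊗ₘ (ρ n).condKernel = ρ n :=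
      fun n => (ρ n).disintegrate (ρ n).condKernel
    have hchain : ∀ n (g : EuclideanSpace ℝ (Fin d) × EuclideanSpace ℝ (Fin d) → ℝ≥0∞),
        Measurable g → ∫⁻ p, g (T n p.1, p.2) ∂(θ n) = ∫⁻ p, g (p.2, p.1) ∂(π n) := by
      intro n g hg
      have hgm : Measurable (fun p : EuclideanSpace ℝ (Fin d) × EuclideanSpace ℝ (Fin d) =>
          g (T n p.1, p.2)) := hg.comp (((hTm n).comp measurable_fst).prodMk measurable_snd)
      have hH : Measurable (fun y => ∫⁻ z, g (y, z) ∂(κ n y)) :=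
        Measurable.lintegral_kernel_prod_right (κ := κ n) hg
      calc ∫⁻ p, g (T n p.1, p.2) ∂(θ n)
          = ∫⁻ x, ∫⁻ y, g (T n x, y) ∂(L n x) ∂μ := Measure.lintegral_compProd hgm
        _ = ∫⁻ x, (fun y => ∫⁻ z, g (y, z) ∂(κ n y)) (T n x) ∂μ := by
            refine lintegral_congr fun x => ?_
            rw [show L n x = κ n (T n x) from Kernel.comap_apply _ _ _]
        _ = ∫⁻ y, ∫⁻ z, g (y, z) ∂(κ n y) ∂(μs n) := by
            rw [← hTpush n]
            exact (lintegral_map hH (hTm n)).symm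
        _ = ∫⁻ y, ∫⁻ z, g (y, z) ∂(κ n y) ∂((ρ n).fst) := by rw [hρfst n]
        _ = ∫⁻ p, g p ∂((ρ n).fst ⊗ₘ κ n) := (Measure.lintegral_compProd hg).symm
        _ = ∫⁻ p, g p ∂(ρ n) := by rw [show κ n = (ρ n).condKernel from rfl, hdis n]
        _ = ∫⁻ p, g (Prod.swap p) ∂(π n) := lintegral_map hg measurable_swap
        _ = ∫⁻ p, g (p.2, p.1) ∂(π n) := lintegral_congr fun p => rfl
    have hθfst : ∀ n (h : EuclideanSpace ℝ (Fin d) → ℝ≥0∞), Measurable h →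
        ∫⁻ p, h p.1 ∂(θ n) = ∫⁻ x, h x ∂μ := by
      intro n h hh
      calc ∫⁻ p, h p.1 ∂(θ n) = ∫⁻ x, ∫⁻ _, h x ∂(L n x) ∂μ :=
            Measure.lintegral_compProd (hh.comp measurable_fst)
        _ = ∫⁻ x, h x ∂μ := by
            refine lintegral_congr fun x => ?_
            simp [lintegral_const]
    have hπfstl : ∀ n (h : EuclideanSpace ℝ (Fin d) → ℝ≥0∞), Measurable h →
        ∫⁻ p, h p.1 ∂(π n) = ∫⁻ x, h x ∂μ := by
      intro n h hh
      rw [← hπf n]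
      exact (lintegral_map hh measurable_fst).symm
    have hmeas_nn : Measurable (fun p : EuclideanSpace ℝ (Fin d) × EuclideanSpace ℝ (Fin d) =>
        (‖p.1 - p.2‖₊ : ℝ≥0∞)) := (measurable_fst.sub measurable_snd).ennnorm
    set C : ℕ → ℝ≥0∞ := fun n => ∫⁻ p, (‖p.1 - p.2‖₊ : ℝ≥0∞) ^ 2 ∂(θ n) with hCdef
    have hC0 : Tendsto C atTop (nhds 0) := by
      have hCb : ∀ n, C n ≤ 4 * ENNReal.ofReal (δ n ^ 2) + 4 * E n := by
        intro n
        have hm1 : Measurable (fun p : EuclideanSpace ℝ (Fin d) × EuclideanSpace ℝ (Fin d) =>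
            (‖p.1 - T n p.1‖₊ : ℝ≥0∞) ^ 2) :=
          ((measurable_fst.sub ((hTm n).comp measurable_fst)).ennnorm).pow_const 2
        have hsplit : C n ≤ 4 * ∫⁻ p, (‖p.1 - T n p.1‖₊ : ℝ≥0∞) ^ 2 ∂(θ n)
            + 4 * ∫⁻ p, (‖T n p.1 - p.2‖₊ : ℝ≥0∞) ^ 2 ∂(θ n) := by
          rw [← lintegral_const_mul' 4 _ (by norm_num), ← lintegral_const_mul' 4 _ (by norm_num),
            ← lintegral_add_left (hm1.const_mul 4)]
          refine lintegral_mono fun p => ?_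
          refine aux_sq2 ?_
          calc (‖p.1 - p.2‖₊ : ℝ≥0∞)
              = (‖(p.1 - T n p.1) + (T n p.1 - p.2)‖₊ : ℝ≥0∞) := by rw [sub_add_sub_cancel]
            _ ≤ _ := by exact_mod_cast nnnorm_add_le _ _
        have ht1 : ∫⁻ p, (‖p.1 - T n p.1‖₊ : ℝ≥0∞) ^ 2 ∂(θ n)
            ≤ ENNReal.ofReal (δ n ^ 2) := by
          have he0 : ∫⁻ p, (‖p.1 - T n p.1‖₊ : ℝ≥0∞) ^ 2 ∂(θ n)
              = ∫⁻ x, (‖x - T n x‖₊ : ℝ≥0∞) ^ 2 ∂μ :=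
            hθfst n (fun x => (‖x - T n x‖₊ : ℝ≥0∞) ^ 2)
              (((measurable_id.sub (hTm n)).ennnorm).pow_const 2)
          rw [he0]
          calc ∫⁻ x, (‖x - T n x‖₊ : ℝ≥0∞) ^ 2 ∂μ
              ≤ ∫⁻ _, ENNReal.ofReal (δ n ^ 2) ∂μ := by
                refine lintegral_mono_ae (hDaem.mono fun x hx => ?_)
                have h1 : (‖x - T n x‖₊ : ℝ≥0∞) ≤ ENNReal.ofReal (δ n) := by
                  rw [← ofReal_norm_eq_coe_nnnorm]
                  exact ENNReal.ofReal_le_ofReal (by rw [← dist_eq_norm]; exact hT n x hx)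
                calc (‖x - T n x‖₊ : ℝ≥0∞) ^ 2 ≤ (ENNReal.ofReal (δ n)) ^ 2 := by gcongr
                  _ = ENNReal.ofReal (δ n ^ 2) := by rw [← ENNReal.ofReal_pow (hδ0 n)]
            _ = ENNReal.ofReal (δ n ^ 2) := by simp [lintegral_const]
        have ht2 : ∫⁻ p, (‖T n p.1 - p.2‖₊ : ℝ≥0∞) ^ 2 ∂(θ n) ≤ E n := by
          have hch := hchain n
            (fun q : EuclideanSpace ℝ (Fin d) × EuclideanSpace ℝ (Fin d) =>
              (‖q.1 - q.2‖₊ : ℝ≥0∞) ^ 2) (hmeas_nn.pow_const 2)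
          calc ∫⁻ p, (‖T n p.1 - p.2‖₊ : ℝ≥0∞) ^ 2 ∂(θ n)
              = ∫⁻ p, (‖p.2 - p.1‖₊ : ℝ≥0∞) ^ 2 ∂(π n) := hch
            _ = ∫⁻ p, (‖p.1 - p.2‖₊ : ℝ≥0∞) ^ 2 ∂(π n) :=
                lintegral_congr fun p => by rw [show ‖p.2 - p.1‖₊ = ‖p.1 - p.2‖₊ by rw [← neg_sub, nnnorm_neg]]
            _ ≤ E n := lintegral_mono fun p => le_self_add
        calc C n ≤ 4 * ∫⁻ p, (‖p.1 - T n p.1‖₊ : ℝ≥0∞) ^ 2 ∂(θ n)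
            + 4 * ∫⁻ p, (‖T n p.1 - p.2‖₊ : ℝ≥0∞) ^ 2 ∂(θ n) := hsplit
          _ ≤ 4 * ENNReal.ofReal (δ n ^ 2) + 4 * E n := by gcongr
      have hb1 : Tendsto (fun n => 4 * ENNReal.ofReal (δ n ^ 2) + 4 * E n) atTop (nhds 0) := by
        have hd : Tendsto (fun n => ENNReal.ofReal (δ n ^ 2)) atTop (nhds 0) := by
          have := ENNReal.tendsto_ofReal (by simpa using hδ.pow 2 :
            Tendsto (fun n => δ n ^ 2) atTop (nhds 0))
          simpa using this
        have h1 := ENNReal.Tendsto.const_mul hd (Or.inr (by norm_num : (4:ℝ≥0∞) ≠ ⊤))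
        have h2 := ENNReal.Tendsto.const_mul hE0 (Or.inr (by norm_num : (4:ℝ≥0∞) ≠ ⊤))
        simpa using h1.add h2
      exact tendsto_of_tendsto_of_tendsto_of_le_of_le tendsto_const_nhds hb1
        (fun n => zero_le) hCb
    -- main claim
    have hclaim : ∀ c : ℝ≥0∞, 0 < c → c ≠ ⊤ → ∀ᶠ n in atTop, G n ≤ 400 * c := by
      intro c hc hctop
      obtain ⟨w, hwsupp, hwlp, hwc, hwmem⟩ :=
        hu'.exists_hasCompactSupport_eLpNorm_sub_le (by norm_num : (2:ℝ≥0∞) ≠ ∞)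
          (by simp [ENNReal.rpow_eq_zero_iff, hc.ne'] : c ^ ((1:ℝ)/2) ≠ 0)
      have hwmeas : Measurable w := hwc.measurable
      have hW : ∫⁻ x, (‖u' x - w x‖₊ : ℝ≥0∞) ^ 2 ∂μ ≤ c := by
        calc ∫⁻ x, (‖u' x - w x‖₊ : ℝ≥0∞) ^ 2 ∂μ
            = eLpNorm (u' - w) 2 μ ^ 2 := aux_lintegral_sq μ _
          _ ≤ (c ^ ((1:ℝ)/2)) ^ 2 := by gcongr
          _ = c := by
              rw [← ENNReal.rpow_natCast (c ^ ((1:ℝ)/2)) 2, ← ENNReal.rpow_mul]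
              norm_num
      obtain ⟨M, hM⟩ := hwc.bounded_above_of_compact_support hwsupp
      have hwu := hwc.uniformContinuous_of_tendsto_cocompact hwsupp.is_zero_at_infty
      set ε₂ : ℝ := Real.sqrt c.toReal with hε₂def
      have hε₂pos : 0 < ε₂ := Real.sqrt_pos.mpr (ENNReal.toReal_pos hc.ne' hctop)
      obtain ⟨η, hη, hηim⟩ := Metric.uniformContinuous_iff.mp hwu ε₂ hε₂pos
      have hofε₂ : (ENNReal.ofReal ε₂) ^ 2 = c := by
        have h1 : ε₂ ^ 2 = c.toReal := Real.sq_sqrt ENNReal.toReal_nonneg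
        rw [← ENNReal.ofReal_pow hε₂pos.le, h1, ENNReal.ofReal_toReal hctop]
      have hMid : ∀ n, ∫⁻ p, (‖w p.1 - w p.2‖₊ : ℝ≥0∞) ^ 2 ∂(θ n)
          ≤ c + (ENNReal.ofReal (2 * M)) ^ 2 * (C n / (ENNReal.ofReal η) ^ 2) := by
        intro n
        set A : Set (EuclideanSpace ℝ (Fin d) × EuclideanSpace ℝ (Fin d)) :=
          {p | ENNReal.ofReal η ≤ (‖p.1 - p.2‖₊ : ℝ≥0∞)} with hAdef
        have hpt : ∀ p : EuclideanSpace ℝ (Fin d) × EuclideanSpace ℝ (Fin d),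
            (‖w p.1 - w p.2‖₊ : ℝ≥0∞) ^ 2 ≤ (ENNReal.ofReal ε₂) ^ 2
              + A.indicator (fun _ => (ENNReal.ofReal (2 * M)) ^ 2) p := by
          intro p
          by_cases hp : p ∈ A
          · rw [Set.indicator_of_mem hp]
            refine le_add_left ?_
            have hb : (‖w p.1 - w p.2‖₊ : ℝ≥0∞) ≤ ENNReal.ofReal (2 * M) := by
              rw [← ofReal_norm_eq_coe_nnnorm]
              refine ENNReal.ofReal_le_ofReal ?_
              calc ‖w p.1 - w p.2‖ ≤ ‖w p.1‖ + ‖w p.2‖ := norm_sub_le _ _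
                _ ≤ 2 * M := by have := hM p.1; have := hM p.2; linarith
            gcongr
          · rw [Set.indicator_of_notMem hp, add_zero]
            have hlt : dist p.1 p.2 < η := by
              have h1 : (‖p.1 - p.2‖₊ : ℝ≥0∞) < ENNReal.ofReal η := not_le.mp hp
              rw [← ofReal_norm_eq_coe_nnnorm] at h1
              rw [dist_eq_norm]
              exact (ENNReal.ofReal_lt_ofReal_iff hη).mp h1
            have h2 := hηim hlt
            gcongr
            rw [← ofReal_norm_eq_coe_nnnorm]
            exact ENNReal.ofReal_le_ofReal (by rw [← dist_eq_norm]; exact h2.le)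
        calc ∫⁻ p, (‖w p.1 - w p.2‖₊ : ℝ≥0∞) ^ 2 ∂(θ n)
            ≤ ∫⁻ p, ((ENNReal.ofReal ε₂) ^ 2
              + A.indicator (fun _ => (ENNReal.ofReal (2 * M)) ^ 2) p) ∂(θ n) :=
              lintegral_mono hpt
          _ = (ENNReal.ofReal ε₂) ^ 2
              + ∫⁻ p, A.indicator (fun _ => (ENNReal.ofReal (2 * M)) ^ 2) p ∂(θ n) := by
              rw [lintegral_add_left measurable_const]
              simp [lintegral_const]
          _ ≤ c + (ENNReal.ofReal (2 * M)) ^ 2 * (C n / (ENNReal.ofReal η) ^ 2) := by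
              rw [hofε₂]
              refine add_le_add_right ?_ c
              calc ∫⁻ p, A.indicator (fun _ => (ENNReal.ofReal (2 * M)) ^ 2) p ∂(θ n)
                  ≤ (ENNReal.ofReal (2 * M)) ^ 2 * (θ n) A := lintegral_indicator_const_le _ _
                _ ≤ (ENNReal.ofReal (2 * M)) ^ 2 * (C n / (ENNReal.ofReal η) ^ 2) := by
                    refine mul_le_mul_right ?_ _
                    have hcheb := mul_meas_ge_le_lintegral (μ := θ n)
                      (hmeas_nn.pow_const 2) ((ENNReal.ofReal η) ^ 2)
                    have hsub : A ⊆ {p : EuclideanSpace ℝ (Fin d) × EuclideanSpace ℝ (Fin d) |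
                        (ENNReal.ofReal η) ^ 2 ≤ (‖p.1 - p.2‖₊ : ℝ≥0∞) ^ 2} :=
                      fun p hp => by simpa using pow_le_pow_left' hp 2
                    refine (ENNReal.le_div_iff_mul_le (Or.inl ?_) (Or.inl ?_)).mpr ?_
                    · simpa [pow_eq_zero_iff] using (ENNReal.ofReal_pos.mpr hη).ne'
                    · exact ENNReal.pow_ne_top ENNReal.ofReal_ne_top
                    · calc (θ n) A * (ENNReal.ofReal η) ^ 2
                          ≤ (θ n) {p : EuclideanSpace ℝ (Fin d) × EuclideanSpace ℝ (Fin d) |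
                            (ENNReal.ofReal η) ^ 2 ≤ (‖p.1 - p.2‖₊ : ℝ≥0∞) ^ 2}
                            * (ENNReal.ofReal η) ^ 2 :=
                            mul_le_mul_left (measure_mono hsub) _
                        _ ≤ C n := by rw [mul_comm]; exact hcheb
      have hK0 : Tendsto (fun n => (ENNReal.ofReal (2 * M)) ^ 2
          * (C n / (ENNReal.ofReal η) ^ 2)) atTop (nhds 0) := by
        have h1 : Tendsto (fun n => C n / (ENNReal.ofReal η) ^ 2) atTop (nhds 0) := by
          simp only [div_eq_mul_inv]
          have := ENNReal.Tendsto.mul_const (b := ((ENNReal.ofReal η) ^ 2)⁻¹) hC0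
            (Or.inr (ENNReal.inv_ne_top.mpr
              (by simpa [pow_eq_zero_iff] using (ENNReal.ofReal_pos.mpr hη).ne')))
          simpa using this
        have := ENNReal.Tendsto.const_mul (a := (ENNReal.ofReal (2 * M)) ^ 2) h1
          (Or.inr (ENNReal.pow_ne_top ENNReal.ofReal_ne_top))
        simpa using this
      have hEev : ∀ᶠ n in atTop, E n < c := hE0.eventually_lt_const hc
      have hKev : ∀ᶠ n in atTop, (ENNReal.ofReal (2 * M)) ^ 2
          * (C n / (ENNReal.ofReal η) ^ 2) < c := hK0.eventually_lt_const hc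
      filter_upwards [hEev, hKev] with n hEn hKn
      have hGn : G n = ∫⁻ p, (‖u' p.1 - us' n (T n p.1)‖₊ : ℝ≥0∞) ^ 2 ∂(θ n) :=
        (hθfst n _ (((hu'meas.sub ((hus'meas n).comp (hTm n))).ennnorm).pow_const 2)).symm
      have hm1 : Measurable (fun p : EuclideanSpace ℝ (Fin d) × EuclideanSpace ℝ (Fin d) =>
          (‖u' p.1 - u' p.2‖₊ : ℝ≥0∞) ^ 2) :=
        (((hu'meas.comp measurable_fst).sub (hu'meas.comp measurable_snd)).ennnorm).pow_const 2
      have hsplit : G n ≤ 4 * ∫⁻ p, (‖u' p.1 - u' p.2‖₊ : ℝ≥0∞) ^ 2 ∂(θ n)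
          + 4 * ∫⁻ p, (‖u' p.2 - us' n (T n p.1)‖₊ : ℝ≥0∞) ^ 2 ∂(θ n) := by
        rw [hGn, ← lintegral_const_mul' 4 _ (by norm_num), ← lintegral_const_mul' 4 _ (by norm_num),
          ← lintegral_add_left (hm1.const_mul 4)]
        refine lintegral_mono fun p => ?_
        refine aux_sq2 ?_
        calc (‖u' p.1 - us' n (T n p.1)‖₊ : ℝ≥0∞)
            = (‖(u' p.1 - u' p.2) + (u' p.2 - us' n (T n p.1))‖₊ : ℝ≥0∞) := by
              rw [sub_add_sub_cancel]
          _ ≤ _ := by exact_mod_cast nnnorm_add_le _ _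
      have hB : ∫⁻ p, (‖u' p.2 - us' n (T n p.1)‖₊ : ℝ≥0∞) ^ 2 ∂(θ n) ≤ E n := by
        have hch := hchain n
          (fun q : EuclideanSpace ℝ (Fin d) × EuclideanSpace ℝ (Fin d) =>
            (‖u' q.2 - us' n q.1‖₊ : ℝ≥0∞) ^ 2)
          ((((hu'meas.comp measurable_snd).sub
            ((hus'meas n).comp measurable_fst)).ennnorm).pow_const 2)
        calc ∫⁻ p, (‖u' p.2 - us' n (T n p.1)‖₊ : ℝ≥0∞) ^ 2 ∂(θ n)
            = ∫⁻ p, (‖u' p.1 - us' n p.2‖₊ : ℝ≥0∞) ^ 2 ∂(π n) := hch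
          _ ≤ E n := lintegral_mono fun p => le_add_self
      have hW1 : ∫⁻ p, (‖u' p.1 - w p.1‖₊ : ℝ≥0∞) ^ 2 ∂(θ n) ≤ c := by
        rw [hθfst n (fun x => (‖u' x - w x‖₊ : ℝ≥0∞) ^ 2) (((hu'meas.sub hwmeas).ennnorm).pow_const 2)]
        exact hW
      have hW3 : ∫⁻ p, (‖w p.2 - u' p.2‖₊ : ℝ≥0∞) ^ 2 ∂(θ n) ≤ c := by
        have hch := hchain n
          (fun q : EuclideanSpace ℝ (Fin d) × EuclideanSpace ℝ (Fin d) =>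
            (‖w q.2 - u' q.2‖₊ : ℝ≥0∞) ^ 2)
          ((((hwmeas.comp measurable_snd).sub (hu'meas.comp measurable_snd)).ennnorm).pow_const 2)
        calc ∫⁻ p, (‖w p.2 - u' p.2‖₊ : ℝ≥0∞) ^ 2 ∂(θ n)
            = ∫⁻ p, (‖w p.1 - u' p.1‖₊ : ℝ≥0∞) ^ 2 ∂(π n) := hch
          _ = ∫⁻ x, (‖w x - u' x‖₊ : ℝ≥0∞) ^ 2 ∂μ :=
              hπfstl n _ (((hwmeas.sub hu'meas).ennnorm).pow_const 2)
          _ = ∫⁻ x, (‖u' x - w x‖₊ : ℝ≥0∞) ^ 2 ∂μ :=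
              lintegral_congr fun x => by rw [show ‖w x - u' x‖₊ = ‖u' x - w x‖₊ by rw [← neg_sub, nnnorm_neg]]
          _ ≤ c := hW
      have hmw1 : Measurable (fun p : EuclideanSpace ℝ (Fin d) × EuclideanSpace ℝ (Fin d) =>
          (‖u' p.1 - w p.1‖₊ : ℝ≥0∞) ^ 2) :=
        (((hu'meas.comp measurable_fst).sub (hwmeas.comp measurable_fst)).ennnorm).pow_const 2
      have hmw2 : Measurable (fun p : EuclideanSpace ℝ (Fin d) × EuclideanSpace ℝ (Fin d) =>
          (‖w p.1 - w p.2‖₊ : ℝ≥0∞) ^ 2) :=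
        (((hwmeas.comp measurable_fst).sub (hwmeas.comp measurable_snd)).ennnorm).pow_const 2
      have hAle : ∫⁻ p, (‖u' p.1 - u' p.2‖₊ : ℝ≥0∞) ^ 2 ∂(θ n) ≤ 64 * c := by
        have hsplitA : ∫⁻ p, (‖u' p.1 - u' p.2‖₊ : ℝ≥0∞) ^ 2 ∂(θ n)
            ≤ 16 * ∫⁻ p, (‖u' p.1 - w p.1‖₊ : ℝ≥0∞) ^ 2 ∂(θ n)
              + 16 * ∫⁻ p, (‖w p.1 - w p.2‖₊ : ℝ≥0∞) ^ 2 ∂(θ n)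
              + 16 * ∫⁻ p, (‖w p.2 - u' p.2‖₊ : ℝ≥0∞) ^ 2 ∂(θ n) := by
          rw [← lintegral_const_mul' 16 _ (by norm_num), ← lintegral_const_mul' 16 _ (by norm_num),
            ← lintegral_const_mul' 16 _ (by norm_num),
            ← lintegral_add_left (hmw1.const_mul 16),
            ← lintegral_add_left (f := fun p :
              EuclideanSpace ℝ (Fin d) × EuclideanSpace ℝ (Fin d) => 16 * (‖u' p.1 - w p.1‖₊ : ℝ≥0∞) ^ 2
              + 16 * (‖w p.1 - w p.2‖₊ : ℝ≥0∞) ^ 2) ((hmw1.const_mul 16).add (hmw2.const_mul 16))]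
          refine lintegral_mono fun p => ?_
          refine aux_sq3 ?_
          calc (‖u' p.1 - u' p.2‖₊ : ℝ≥0∞)
              = (‖(u' p.1 - w p.1) + (w p.1 - w p.2) + (w p.2 - u' p.2)‖₊ : ℝ≥0∞) := by
                rw [sub_add_sub_cancel, sub_add_sub_cancel]
            _ ≤ ((‖(u' p.1 - w p.1) + (w p.1 - w p.2)‖₊ + ‖w p.2 - u' p.2‖₊ : NNReal) : ℝ≥0∞) := by
                exact_mod_cast nnnorm_add_le _ _
            _ ≤ _ := by
                push_cast
                gcongr
                exact_mod_cast nnnorm_add_le _ _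
        have hMidn : ∫⁻ p, (‖w p.1 - w p.2‖₊ : ℝ≥0∞) ^ 2 ∂(θ n) ≤ c + c :=
          (hMid n).trans (add_le_add_right hKn.le c)
        calc ∫⁻ p, (‖u' p.1 - u' p.2‖₊ : ℝ≥0∞) ^ 2 ∂(θ n)
            ≤ 16 * ∫⁻ p, (‖u' p.1 - w p.1‖₊ : ℝ≥0∞) ^ 2 ∂(θ n)
              + 16 * ∫⁻ p, (‖w p.1 - w p.2‖₊ : ℝ≥0∞) ^ 2 ∂(θ n)
              + 16 * ∫⁻ p, (‖w p.2 - u' p.2‖₊ : ℝ≥0∞) ^ 2 ∂(θ n) := hsplitA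
          _ ≤ 16 * c + 16 * (c + c) + 16 * c := by gcongr
          _ = 64 * c := by ring
      calc G n ≤ 4 * ∫⁻ p, (‖u' p.1 - u' p.2‖₊ : ℝ≥0∞) ^ 2 ∂(θ n)
          + 4 * ∫⁻ p, (‖u' p.2 - us' n (T n p.1)‖₊ : ℝ≥0∞) ^ 2 ∂(θ n) := hsplit
        _ ≤ 4 * (64 * c) + 4 * c := by gcongr <;> first | exact hAle | exact hB.trans hEn.le
        _ = 260 * c := by ring
        _ ≤ 400 * c := by gcongr <;> norm_num
    -- conclude
    rw [ENNReal.tendsto_atTop_zero]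
    intro ε hε
    rcases eq_or_ne ε ⊤ with hεt | hεt
    · obtain ⟨N, hN⟩ := eventually_atTop.mp (hclaim 1 (by norm_num) (by norm_num))
      exact ⟨N, fun n hn => by rw [hεt]; exact le_top⟩
    · have hc : 0 < ε / 400 := ENNReal.div_pos hε.ne' (by norm_num)
      have hct : ε / 400 ≠ ⊤ := (ENNReal.div_lt_top hεt (by norm_num)).ne
      obtain ⟨N, hN⟩ := eventually_atTop.mp (hclaim (ε / 400) hc hct)
      refine ⟨N, fun n hn => (hN n hn).trans ?_⟩
      rw [ENNReal.mul_div_cancel' (by norm_num) (by norm_num)]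
  · -- converse direction
    intro _hweak hconv
    have hb : Tendsto (fun n => Real.sqrt (δ n ^ 2 + ∫ x, |u x - us n (T n x)| ^ 2 ∂μ))
        atTop (nhds 0) := by
      have h1 : Tendsto (fun n => δ n ^ 2 + ∫ x, |u x - us n (T n x)| ^ 2 ∂μ)
          atTop (nhds 0) := by
        have := (hδ.pow 2).add hconv
        simpa using this
      have := (Real.continuous_sqrt.continuousAt (x := 0)).tendsto.comp h1
      simpa [Function.comp_def] using this
    exact tendsto_of_tendsto_of_tendsto_of_le_of_le tendsto_const_nhds hb hd0 hkey
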